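/- arXiv:2603.19911 — 3 statements merged into one kernel-verified Lean document; each statement's English description precedes it below -/
import Mathlib

section
/- Let X and Y be positive definite complex n×n matrices, let ℓ ≥ 1, let N₁, …, N_ℓ be Hermitian complex n×n matrices with N_ℓ positive definite, and let L be a Hermitian complex n×n matrix. Suppose the block matrix [[X, N₁],[N₁, Y]] is positive semidefinite, for every i ∈ {1, …, ℓ−1} the block matrix [[X, N_{i+1}],[N_{i+1}, N_i]] is positive semidefinite, and the block matrix [[L, X],[X, N_ℓ]] is positive semidefinite. Then L ≥ G_{−2^{−ℓ}}(X,Y), i.e., L − G_{−2^{−ℓ}}(X,Y) is positive semidefinite. -/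
open Matrix Kronecker
open scoped ComplexOrder

noncomputable section

/-- Apply a real function to a complex matrix via the spectral decomposition
(meaningful for Hermitian matrices; defined as `0` otherwise). -/
def matFun {n : Type*} [Fintype n] [DecidableEq n]
    (f : ℝ → ℝ) (A : Matrix n n ℂ) : Matrix n n ℂ :=
  if hA : A.IsHermitian then
    (hA.eigenvectorUnitary : Matrix n n ℂ) *
      Matrix.diagonal (fun i => (f (hA.eigenvalues i) : ℂ)) *
      (hA.eigenvectorUnitary : Matrix n n ℂ)ᴴ
  else 0

/-- Real power of a matrix (via the spectral decomposition). -/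
def mpow {n : Type*} [Fintype n] [DecidableEq n] (A : Matrix n n ℂ) (t : ℝ) :
    Matrix n n ℂ :=
  matFun (fun x => x ^ t) A

/-- Logarithm of a matrix (via the spectral decomposition). -/
def mlog {n : Type*} [Fintype n] [DecidableEq n] (A : Matrix n n ℂ) : Matrix n n ℂ :=
  matFun Real.log A

/-- The operator relative entropy `D_op(X‖Y) = X^{1/2} log(X^{1/2} Y⁻¹ X^{1/2}) X^{1/2}`. -/
def Dop {n : Type*} [Fintype n] [DecidableEq n] (X Y : Matrix n n ℂ) : Matrix n n ℂ :=
  mpow X (1/2) * mlog (mpow X (1/2) * Y⁻¹ * mpow X (1/2)) * mpow X (1/2)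

/-- The Belavkin--Staszewski relative entropy `D̂(ρ‖σ) = Re Tr[D_op(ρ‖σ)]`. -/
def BSEntropy {n : Type*} [Fintype n] [DecidableEq n] (ρ σ : Matrix n n ℂ) : ℝ :=
  (Dop ρ σ).trace.re

/-- The weighted matrix geometric mean `G_t(X,Y) = X^{1/2} (X^{-1/2} Y X^{-1/2})^t X^{1/2}`. -/
def geoMean {n : Type*} [Fintype n] [DecidableEq n] (t : ℝ) (X Y : Matrix n n ℂ) :
    Matrix n n ℂ :=
  mpow X (1/2) * mpow (mpow X (-(1/2)) * Y * mpow X (-(1/2))) t * mpow X (1/2)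

/-- Partial trace over the second (B) factor. -/
def ptraceB {R B : Type*} [Fintype B] (M : Matrix (R × B) (R × B) ℂ) : Matrix R R ℂ :=
  Matrix.of fun r r' => ∑ b, M (r, b) (r', b)

/-- Partial trace over the first (R) factor. -/
def ptraceR {R A : Type*} [Fintype R] (M : Matrix (R × A) (R × A) ℂ) : Matrix A A ℂ :=
  Matrix.of fun a a' => ∑ r, M (r, a) (r, a')

/-- The map associated to a Choi matrix `J` (indexed by `(A × B) × (A × B)`), applied to a
matrix indexed by `(R × A) × (R × A)`. -/
def choiMap {R A B : Type*} [Fintype A] (J : Matrix (A × B) (A × B) ℂ)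
    (X : Matrix (R × A) (R × A) ℂ) : Matrix (R × B) (R × B) ℂ :=
  Matrix.of fun p q => ∑ a, ∑ a', X (p.1, a) (q.1, a') * J (a, p.2) (a', q.2)



/-! ### Auxiliary lemmas -/

section Aux

set_option linter.unusedSectionVars false
set_option maxHeartbeats 1000000

variable {n : Type*} [Fintype n] [DecidableEq n] {A S T D : Matrix n n ℂ} {f g : ℝ → ℝ}

lemma matFun_eq (hA : A.IsHermitian) (f : ℝ → ℝ) :
    matFun f A = (hA.eigenvectorUnitary : Matrix n n ℂ) *
      Matrix.diagonal (fun i => (f (hA.eigenvalues i) : ℂ)) *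
      (hA.eigenvectorUnitary : Matrix n n ℂ)ᴴ := dif_pos hA

lemma eu_mul_star (hA : A.IsHermitian) :
    (hA.eigenvectorUnitary : Matrix n n ℂ) * (hA.eigenvectorUnitary : Matrix n n ℂ)ᴴ = 1 := by
  rw [← Matrix.star_eq_conjTranspose]
  exact (Matrix.mem_unitaryGroup_iff).mp hA.eigenvectorUnitary.2

lemma star_mul_eu (hA : A.IsHermitian) :
    (hA.eigenvectorUnitary : Matrix n n ℂ)ᴴ * (hA.eigenvectorUnitary : Matrix n n ℂ) = 1 := by
  rw [← Matrix.star_eq_conjTranspose]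
  exact (Matrix.mem_unitaryGroup_iff').mp hA.eigenvectorUnitary.2

lemma matFun_isHermitian (f : ℝ → ℝ) (A : Matrix n n ℂ) : (matFun f A).IsHermitian := by
  unfold matFun
  split_ifs with hA
  · unfold Matrix.IsHermitian
    have : (star fun i => (f (hA.eigenvalues i) : ℂ)) = fun i => (f (hA.eigenvalues i) : ℂ) := by
      funext i; simp
    simp [Matrix.conjTranspose_mul, Matrix.diagonal_conjTranspose, mul_assoc, this]
  · exact Matrix.isHermitian_zero

lemma matFun_mul (hA : A.IsHermitian) (f g : ℝ → ℝ) :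
    matFun f A * matFun g A = matFun (fun x => f x * g x) A := by
  rw [matFun_eq hA f, matFun_eq hA g, matFun_eq hA]
  simp only [mul_assoc]
  rw [← mul_assoc ((hA.eigenvectorUnitary : Matrix n n ℂ)ᴴ) _ _, star_mul_eu hA, one_mul,
    ← mul_assoc (Matrix.diagonal _), Matrix.diagonal_mul_diagonal]
  push_cast
  rfl

lemma matFun_congr (hA : A.IsHermitian)
    (h : ∀ i, f (hA.eigenvalues i) = g (hA.eigenvalues i)) : matFun f A = matFun g A := by
  rw [matFun_eq hA f, matFun_eq hA g]
  have : (fun i => (f (hA.eigenvalues i) : ℂ)) = fun i => (g (hA.eigenvalues i) : ℂ) :=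
    funext fun i => by rw [h i]
  rw [this]

lemma matFun_sub (hA : A.IsHermitian) (f g : ℝ → ℝ) :
    matFun f A - matFun g A = matFun (fun x => f x - g x) A := by
  rw [matFun_eq hA f, matFun_eq hA g, matFun_eq hA]
  rw [← Matrix.sub_mul, ← Matrix.mul_sub, Matrix.diagonal_sub]
  push_cast
  rfl

lemma matFun_id (hA : A.IsHermitian) : matFun (fun x => x) A = A := by
  rw [matFun_eq hA]
  conv_rhs => rw [hA.spectral_theorem]
  rfl

lemma matFun_one (hA : A.IsHermitian) : matFun (fun _ => 1) A = 1 := by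
  rw [matFun_eq hA]
  have : Matrix.diagonal (fun _ : n => ((1:ℝ) : ℂ)) = 1 := by simp
  rw [this, mul_one, eu_mul_star hA]

lemma matFun_posSemidef (hA : A.IsHermitian) (hf : ∀ i, 0 ≤ f (hA.eigenvalues i)) :
    (matFun f A).PosSemidef := by
  rw [matFun_eq hA]
  exact (Matrix.posSemidef_diagonal_iff.mpr (fun i => by
    simpa using Complex.zero_le_real.mpr (hf i))).mul_mul_conjTranspose_same _

lemma posDef_conj {B C : Matrix n n ℂ} (hB : B.PosDef) (hC : IsUnit C) :
    (C * B * Cᴴ).PosDef := by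
  refine Matrix.posDef_iff_dotProduct_mulVec.mpr ⟨?_, fun x hx => ?_⟩
  · have : (C * B * Cᴴ)ᴴ = C * Bᴴ * Cᴴ := by
      simp [Matrix.conjTranspose_mul, mul_assoc]
    rw [Matrix.IsHermitian, this, hB.1.eq]
  · have hxc : Cᴴ *ᵥ x ≠ 0 := by
      intro h
      exact hx (by simpa using (Matrix.mulVec_injective_iff_isUnit.mpr
        ((Matrix.isUnit_conjTranspose _).mpr hC)) (h.trans (Matrix.mulVec_zero _).symm))
    have h2 := hB.dotProduct_mulVec_pos hxc
    rw [← Matrix.mulVec_mulVec, ← Matrix.mulVec_mulVec, Matrix.dotProduct_mulVec]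
    rwa [Matrix.star_mulVec, Matrix.conjTranspose_conjTranspose] at h2

lemma matFun_posDef (hA : A.IsHermitian) (hf : ∀ i, 0 < f (hA.eigenvalues i)) :
    (matFun f A).PosDef := by
  rw [matFun_eq hA]
  refine posDef_conj (Matrix.posDef_diagonal_iff.mpr (fun i => by
    simpa using Complex.zero_lt_real.mpr (hf i))) ?_
  letI : Invertible (hA.eigenvectorUnitary : Matrix n n ℂ) :=
    ⟨(hA.eigenvectorUnitary : Matrix n n ℂ)ᴴ, star_mul_eu hA, eu_mul_star hA⟩
  exact isUnit_of_invertible _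

/-! ### `mpow` lemmas -/

lemma mpow_isHermitian (A : Matrix n n ℂ) (t : ℝ) : (mpow A t).IsHermitian :=
  matFun_isHermitian _ _

lemma mpow_posDef (hA : A.PosDef) (t : ℝ) : (mpow A t).PosDef :=
  matFun_posDef hA.1 (fun i => Real.rpow_pos_of_pos (hA.eigenvalues_pos i) t)

lemma mpow_mul_mpow (hA : A.PosDef) (s t : ℝ) : mpow A s * mpow A t = mpow A (s + t) := by
  rw [mpow, mpow, mpow, matFun_mul hA.1]
  exact matFun_congr hA.1 (fun i => (Real.rpow_add (hA.eigenvalues_pos i) s t).symm)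

lemma mpow_zero (hA : A.IsHermitian) : mpow A 0 = 1 := by
  rw [mpow, matFun_congr hA (g := fun _ => 1) (fun i => Real.rpow_zero _), matFun_one hA]

lemma mpow_one (hA : A.IsHermitian) : mpow A 1 = A := by
  rw [mpow, matFun_congr hA (g := fun x => x) (fun i => Real.rpow_one _), matFun_id hA]

lemma inv_eq_mpow (hA : A.PosDef) : A⁻¹ = mpow A (-1) := by
  have h : mpow A 1 * mpow A (-1) = 1 := by
    rw [mpow_mul_mpow hA]; norm_num [mpow_zero hA.1]
  rw [mpow_one hA.1] at h
  exact Matrix.inv_eq_right_inv h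

lemma mpow_half_sq_inv (hA : A.PosDef) :
    mpow A (-(1/2)) * mpow A (-(1/2)) = A⁻¹ := by
  rw [mpow_mul_mpow hA, inv_eq_mpow hA]; norm_num

lemma mpow_half_sq (hA : A.PosDef) : mpow A (1/2) * mpow A (1/2) = A := by
  rw [mpow_mul_mpow hA]; norm_num [mpow_one hA.1]

lemma mpow_half_mul_neg (hA : A.PosDef) : mpow A (1/2) * mpow A (-(1/2)) = 1 := by
  rw [mpow_mul_mpow hA]; norm_num [mpow_zero hA.1]

lemma mpow_neg_mul_half (hA : A.PosDef) : mpow A (-(1/2)) * mpow A (1/2) = 1 := by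
  rw [mpow_mul_mpow hA]; norm_num [mpow_zero hA.1]

lemma mpow_half_conj (hA : A.PosDef) : mpow A (-(1/2)) * A * mpow A (-(1/2)) = 1 := by
  have h : mpow A (-(1/2)) * mpow A 1 * mpow A (-(1/2)) = 1 := by
    rw [mpow_mul_mpow hA, mpow_mul_mpow hA]; norm_num [mpow_zero hA.1]
  rwa [mpow_one hA.1] at h

/-! ### Positivity helpers -/

lemma herm_dot (hD : D.IsHermitian) (v w : n → ℂ) :
    star v ⬝ᵥ (D *ᵥ w) = star (D *ᵥ v) ⬝ᵥ w := by
  rw [Matrix.dotProduct_mulVec, Matrix.star_mulVec, hD.eq]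

lemma psd_conj_herm {B C : Matrix n n ℂ} (hB : B.PosSemidef) (hC : C.IsHermitian) :
    (C * B * C).PosSemidef := by
  have := hB.mul_mul_conjTranspose_same C
  rwa [hC.eq] at this

lemma posDef_conj_herm {B W : Matrix n n ℂ} (hB : B.PosDef) (hW : W.PosDef) :
    (W * B * W).PosDef := by
  have := posDef_conj hB hW.isUnit
  rwa [hW.1.eq] at this

lemma psd_add_sub {A B C : Matrix n n ℂ} (h1 : (B - A).PosSemidef)
    (h2 : (C - B).PosSemidef) : (C - A).PosSemidef := by
  have := h2.add h1
  rwa [sub_add_sub_cancel] at this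

lemma conj_sub (W P Q W' : Matrix n n ℂ) :
    W * (P - Q) * W' = W * P * W' - W * Q * W' := by
  rw [Matrix.mul_sub, Matrix.sub_mul]

lemma conj_cancel {W W' : Matrix n n ℂ} (h1 : W' * W = 1) (h2 : W * W' = 1)
    (P : Matrix n n ℂ) : W' * (W * P * W) * W' = P := by
  have h : W' * (W * P * W) * W' = (W' * W) * P * (W * W') := by
    simp only [mul_assoc]
  rw [h, h1, h2, one_mul, mul_one]

lemma conj_split (W Nm : Matrix n n ℂ) :
    W * (Nm * (W * W) * Nm) * W = (W * Nm * W) * (W * Nm * W) := by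
  simp only [mul_assoc]

lemma triple_inv {W W' P P' : Matrix n n ℂ} (h1 : W' * W = 1) (h2 : W * W' = 1)
    (hp : P' * P = 1) : (W * P * W)⁻¹ = W' * P' * W' := by
  apply Matrix.inv_eq_left_inv
  have h : (W' * P' * W') * (W * P * W) = W' * (P' * ((W' * W) * (P * W))) := by
    simp only [mul_assoc]
  rw [h, h1, one_mul, ← mul_assoc P' P W, hp, one_mul, h1]

lemma conj_double {R R' : Matrix n n ℂ} (h1 : R' * R = 1) (h2 : R * R' = 1)
    (P : Matrix n n ℂ) : (R * R) * (R' * P * R') * (R * R) = R * P * R := by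
  have h : (R * R) * (R' * P * R') * (R * R) = R * ((R * R') * (P * ((R' * R) * R))) := by
    simp only [mul_assoc]
  rw [h, h1, h2, one_mul, one_mul, ← mul_assoc]

/-- Square-root-type operator monotonicity. -/
lemma sub_psd_of_sq (hS : S.PosSemidef) (hT : T.PosDef)
    (h : (T * T - S * S).PosSemidef) : (T - S).PosSemidef := by
  have hD : (T - S).IsHermitian := hT.1.sub hS.1
  apply hD.posSemidef_iff_eigenvalues_nonneg.mpr
  intro i
  set lam := hD.eigenvalues i with hlam
  set v : n → ℂ := ⇑(hD.eigenvectorBasis i) with hv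
  have hvne : v ≠ 0 := fun h => hD.eigenvectorBasis.orthonormal.ne_zero i
    (WithLp.ofLp_injective 2 h)
  have hev : (T - S) *ᵥ v = (lam : ℂ) • v := by
    rw [hv, hlam, hD.mulVec_eigenvectorBasis i]
    funext j
    simp [Complex.real_smul]
  have hsplit : T * T - S * S = T * (T - S) + (T - S) * S := by
    rw [Matrix.mul_sub, Matrix.sub_mul]
    abel
  have h0 : 0 ≤ Complex.re (star v ⬝ᵥ ((T * T - S * S) *ᵥ v)) := h.re_dotProduct_nonneg v
  have hcalc : star v ⬝ᵥ ((T * T - S * S) *ᵥ v)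
      = (lam : ℂ) * (star v ⬝ᵥ (T *ᵥ v)) + (lam : ℂ) * (star v ⬝ᵥ (S *ᵥ v)) := by
    rw [hsplit, Matrix.add_mulVec, dotProduct_add]
    congr 1
    · rw [← Matrix.mulVec_mulVec, hev, Matrix.mulVec_smul, dotProduct_smul]
      rfl
    · rw [← Matrix.mulVec_mulVec, herm_dot hD, hev, star_smul, smul_dotProduct]
      simp [Complex.conj_ofReal]
  rw [hcalc] at h0
  have hTpos : 0 < Complex.re (star v ⬝ᵥ (T *ᵥ v)) := hT.re_dotProduct_pos hvne
  have hSpos : 0 ≤ Complex.re (star v ⬝ᵥ (S *ᵥ v)) := hS.re_dotProduct_nonneg v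
  simp only [Complex.add_re, Complex.mul_re, Complex.ofReal_re, Complex.ofReal_im,
    zero_mul, sub_zero] at h0
  show (0:ℝ) ≤ lam
  nlinarith [h0, hTpos, hSpos]

lemma le_abs_matFun {C : Matrix n n ℂ} (hC : C.IsHermitian) :
    (matFun (fun x => |x|) C - C).PosSemidef := by
  have h1 := matFun_sub hC (fun x => |x|) (fun x => x)
  rw [matFun_id hC] at h1
  rw [h1]
  exact matFun_posSemidef hC (fun i => sub_nonneg.mpr (le_abs_self _))

lemma abs_matFun_sq {C : Matrix n n ℂ} (hC : C.IsHermitian) :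
    matFun (fun x => |x|) C * matFun (fun x => |x|) C = C * C := by
  rw [matFun_mul hC]
  have h2 := matFun_mul hC (fun x => x) (fun x => x)
  rw [matFun_id hC] at h2
  rw [h2]
  exact matFun_congr hC (fun i => by simpa using abs_mul_abs_self (hC.eigenvalues i))

/-! ### Inverse antitonicity -/

lemma inv_sub_inv_psd {A B : Matrix n n ℂ} (hA : A.PosDef) (hB : B.PosDef)
    (h : (B - A).PosSemidef) : (A⁻¹ - B⁻¹).PosSemidef := by
  have hWh : (mpow A (-(1/2))).IsHermitian := mpow_isHermitian _ _
  have hW : (mpow A (-(1/2))).PosDef := mpow_posDef hA _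
  have hK : (mpow A (-(1/2)) * B * mpow A (-(1/2))).PosDef := posDef_conj_herm hB hW
  have hK1 : (mpow A (-(1/2)) * B * mpow A (-(1/2)) - 1).PosSemidef := by
    have hc := psd_conj_herm h hWh
    rwa [conj_sub, mpow_half_conj hA] at hc
  have hVh : (mpow (mpow A (-(1/2)) * B * mpow A (-(1/2))) (-(1/2))).IsHermitian :=
    mpow_isHermitian _ _
  have hK1' : ((1 : Matrix n n ℂ) - (mpow A (-(1/2)) * B * mpow A (-(1/2)))⁻¹).PosSemidef := by
    have hc := psd_conj_herm hK1 hVh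
    rwa [conj_sub, mpow_half_conj hK, mul_one, mpow_half_sq_inv hK] at hc
  have hBinv : B⁻¹ = mpow A (-(1/2)) * (mpow A (-(1/2)) * B * mpow A (-(1/2)))⁻¹ *
      mpow A (-(1/2)) := by
    apply Matrix.inv_eq_left_inv
    have hKK : (mpow A (-(1/2)) * B * mpow A (-(1/2)))⁻¹ *
        (mpow A (-(1/2)) * B * mpow A (-(1/2))) = 1 :=
      Matrix.nonsing_inv_mul _ ((Matrix.isUnit_iff_isUnit_det _).mp hK.isUnit)
    have hBe : B = mpow A (1/2) * (mpow A (-(1/2)) * B * mpow A (-(1/2))) * mpow A (1/2) :=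
      (conj_cancel (mpow_half_mul_neg hA) (mpow_neg_mul_half hA) B).symm
    conv_lhs => rw [mul_assoc]; rhs; rw [hBe]
    have h' : mpow A (-(1/2)) * (mpow A (-(1/2)) * B * mpow A (-(1/2)))⁻¹ *
        (mpow A (-(1/2)) * (mpow A (1/2) * (mpow A (-(1/2)) * B * mpow A (-(1/2))) *
          mpow A (1/2)))
        = mpow A (-(1/2)) * ((mpow A (-(1/2)) * B * mpow A (-(1/2)))⁻¹ *
          ((mpow A (-(1/2)) * mpow A (1/2)) *
            ((mpow A (-(1/2)) * B * mpow A (-(1/2))) * mpow A (1/2)))) := by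
      simp only [mul_assoc]
    rw [h', mpow_neg_mul_half hA, one_mul,
      ← mul_assoc ((mpow A (-(1/2)) * B * mpow A (-(1/2)))⁻¹), hKK, one_mul,
      mpow_neg_mul_half hA]
  have hc := psd_conj_herm hK1' hWh
  rw [conj_sub, mul_one, mpow_half_sq_inv hA, ← hBinv] at hc
  exact hc

/-! ### Geometric-mean lemmas -/

lemma geo_def (t : ℝ) (X Y : Matrix n n ℂ) :
    geoMean t X Y = mpow X (1/2) *
      mpow (mpow X (-(1/2)) * Y * mpow X (-(1/2))) t * mpow X (1/2) := rfl

lemma geoM_posDef {X Y : Matrix n n ℂ} (hX : X.PosDef) (hY : Y.PosDef) :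
    (mpow X (-(1/2)) * Y * mpow X (-(1/2))).PosDef :=
  posDef_conj_herm hY (mpow_posDef hX _)

lemma geo_posDef {X Y : Matrix n n ℂ} (hX : X.PosDef) (hY : Y.PosDef) (t : ℝ) :
    (geoMean t X Y).PosDef := by
  rw [geo_def]
  exact posDef_conj_herm (mpow_posDef (geoM_posDef hX hY) t) (mpow_posDef hX _)

lemma geo_one {X Y : Matrix n n ℂ} (hX : X.PosDef) (hY : Y.PosDef) :
    geoMean 1 X Y = Y := by
  rw [geo_def, mpow_one (geoM_posDef hX hY).1]
  exact conj_cancel (mpow_half_mul_neg hX) (mpow_neg_mul_half hX) Y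

lemma geo_neg {X Y : Matrix n n ℂ} (hX : X.PosDef) (hY : Y.PosDef) (t : ℝ) :
    X * (geoMean t X Y)⁻¹ * X = geoMean (-t) X Y := by
  have hM := geoM_posDef hX hY
  have hp : mpow (mpow X (-(1/2)) * Y * mpow X (-(1/2))) (-t) *
      mpow (mpow X (-(1/2)) * Y * mpow X (-(1/2))) t = 1 := by
    rw [mpow_mul_mpow hM]; norm_num [mpow_zero hM.1]
  have hinv : (geoMean t X Y)⁻¹ = mpow X (-(1/2)) *
      mpow (mpow X (-(1/2)) * Y * mpow X (-(1/2))) (-t) * mpow X (-(1/2)) := by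
    rw [geo_def]
    exact triple_inv (mpow_neg_mul_half hX) (mpow_half_mul_neg hX) hp
  calc X * (geoMean t X Y)⁻¹ * X
      = (mpow X (1/2) * mpow X (1/2)) * (geoMean t X Y)⁻¹ *
        (mpow X (1/2) * mpow X (1/2)) := by rw [mpow_half_sq hX]
    _ = geoMean (-t) X Y := by
        rw [hinv, geo_def]
        exact conj_double (mpow_neg_mul_half hX) (mpow_half_mul_neg hX)
          (mpow (mpow X (-(1/2)) * Y * mpow X (-(1/2))) (-t))

/-- The key halving step. -/
lemma geo_half {X Y Nm : Matrix n n ℂ} (hX : X.PosDef) (hY : Y.PosDef)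
    (hN : Nm.IsHermitian) (t : ℝ)
    (h : (geoMean t X Y - Nm * X⁻¹ * Nm).PosSemidef) :
    (geoMean (t/2) X Y - Nm).PosSemidef := by
  have hM := geoM_posDef hX hY
  have hR'h : (mpow X (-(1/2))).IsHermitian := mpow_isHermitian _ _
  have hRh : (mpow X (1/2)).IsHermitian := mpow_isHermitian _ _
  have hCh : (mpow X (-(1/2)) * Nm * mpow X (-(1/2))).IsHermitian := by
    have : (mpow X (-(1/2)) * Nm * mpow X (-(1/2)))ᴴ
        = mpow X (-(1/2)) * Nm * mpow X (-(1/2)) := by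
      simp only [Matrix.conjTranspose_mul, hR'h.eq, hN.eq, mul_assoc]
    exact this
  -- step 1: conjugate by `mpow X (-(1/2))`
  have step1 : (mpow (mpow X (-(1/2)) * Y * mpow X (-(1/2))) t -
      (mpow X (-(1/2)) * Nm * mpow X (-(1/2))) *
      (mpow X (-(1/2)) * Nm * mpow X (-(1/2)))).PosSemidef := by
    have hc := psd_conj_herm h hR'h
    rw [geo_def, conj_sub,
      conj_cancel (mpow_neg_mul_half hX) (mpow_half_mul_neg hX),
      ← mpow_half_sq_inv hX, conj_split] at hc
    exact hc
  -- step 2: take square roots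
  have hTT : mpow (mpow X (-(1/2)) * Y * mpow X (-(1/2))) (t/2) *
      mpow (mpow X (-(1/2)) * Y * mpow X (-(1/2))) (t/2)
      = mpow (mpow X (-(1/2)) * Y * mpow X (-(1/2))) t := by
    rw [mpow_mul_mpow hM, add_halves]
  have step2 : (mpow (mpow X (-(1/2)) * Y * mpow X (-(1/2))) (t/2) -
      (mpow X (-(1/2)) * Nm * mpow X (-(1/2)))).PosSemidef := by
    have hS : (matFun (fun x => |x|) (mpow X (-(1/2)) * Nm * mpow X (-(1/2)))).PosSemidef :=
      matFun_posSemidef hCh (fun i => abs_nonneg _)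
    have hT : (mpow (mpow X (-(1/2)) * Y * mpow X (-(1/2))) (t/2)).PosDef := mpow_posDef hM _
    have hsq : (mpow (mpow X (-(1/2)) * Y * mpow X (-(1/2))) (t/2) *
        mpow (mpow X (-(1/2)) * Y * mpow X (-(1/2))) (t/2) -
        matFun (fun x => |x|) (mpow X (-(1/2)) * Nm * mpow X (-(1/2))) *
        matFun (fun x => |x|) (mpow X (-(1/2)) * Nm * mpow X (-(1/2)))).PosSemidef := by
      rw [hTT, abs_matFun_sq hCh]
      exact step1
    exact psd_add_sub (le_abs_matFun hCh) (sub_psd_of_sq hS hT hsq)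
  -- step 3: conjugate back by `mpow X (1/2)`
  have hc := psd_conj_herm step2 hRh
  rw [conj_sub, conj_cancel (mpow_half_mul_neg hX) (mpow_neg_mul_half hX), ← geo_def] at hc
  exact hc

end Aux

/-- the chain of semidefinite constraints, together with
`[[L, X],[X, N_ℓ]] ⪰ 0`, implies `L ≥ G_{−2^{−ℓ}}(X,Y)`. -/
theorem geoMean_sdp_chain_neg_power {n ℓ : ℕ} (hℓ : 1 ≤ ℓ)
    (X Y : Matrix (Fin n) (Fin n) ℂ) (hX : X.PosDef) (hY : Y.PosDef)
    (N : ℕ → Matrix (Fin n) (Fin n) ℂ)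
    (hHerm : ∀ i, 1 ≤ i → i ≤ ℓ → (N i).IsHermitian)
    (hNℓ : (N ℓ).PosDef)
    (L : Matrix (Fin n) (Fin n) ℂ) (hL : L.IsHermitian)
    (h1 : (Matrix.fromBlocks X (N 1) (N 1) Y).PosSemidef)
    (hstep : ∀ i, 1 ≤ i → i + 1 ≤ ℓ →
      (Matrix.fromBlocks X (N (i + 1)) (N (i + 1)) (N i)).PosSemidef)
    (hLblk : (Matrix.fromBlocks L X X (N ℓ)).PosSemidef) :
    (L - geoMean (-((2 : ℝ) ^ (-(ℓ : ℤ)))) X Y).PosSemidef := by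
  classical
  haveI : Invertible X :=
    X.invertibleOfIsUnitDet ((Matrix.isUnit_iff_isUnit_det X).mp hX.isUnit)
  have hind : ∀ i, 1 ≤ i → i ≤ ℓ →
      (geoMean ((2:ℝ)^(-(i:ℤ))) X Y - N i).PosSemidef := by
    intro i
    induction i with
    | zero => intro h1' _; exact absurd h1' (by omega)
    | succ i ih =>
      intro _ hle
      rcases Nat.eq_zero_or_pos i with h0 | hpos
      · subst h0
        have hN1 : (N 1).IsHermitian := hHerm 1 le_rfl hℓ
        have h1' : (Matrix.fromBlocks X (N 1) ((N 1)ᴴ) Y).PosSemidef := by rwa [hN1.eq]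
        have hsch := (Matrix.PosDef.fromBlocks₁₁ (N 1) Y hX).mp h1'
        rw [hN1.eq] at hsch
        have hgeo1 : (geoMean 1 X Y - N 1 * X⁻¹ * N 1).PosSemidef := by
          rwa [geo_one hX hY]
        have hres := geo_half hX hY hN1 1 hgeo1
        have he : ((2:ℝ)^(-((0+1:ℕ):ℤ))) = 1/2 := by norm_num
        rw [he]
        exact hres
      · have hNi : (N i).IsHermitian := hHerm i hpos (by omega)
        have hNi1 : (N (i+1)).IsHermitian := hHerm (i+1) (by omega) hle
        have hstep' : (Matrix.fromBlocks X (N (i+1)) ((N (i+1))ᴴ) (N i)).PosSemidef := by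
          rw [hNi1.eq]; exact hstep i hpos hle
        have hsch := (Matrix.PosDef.fromBlocks₁₁ (N (i+1)) (N i) hX).mp hstep'
        rw [hNi1.eq] at hsch
        have hih := ih (by omega) (by omega)
        have hcomb := psd_add_sub hsch hih
        have hres := geo_half hX hY hNi1 ((2:ℝ)^(-(i:ℤ))) hcomb
        have he : ((2:ℝ)^(-(i:ℤ)))/2 = (2:ℝ)^(-((i+1:ℕ):ℤ)) := by
          rw [show (-((i+1:ℕ):ℤ)) = (-(i:ℤ)) + (-1) by push_cast; ring,
            zpow_add₀ (by norm_num : (2:ℝ) ≠ 0)]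
          norm_num
          ring
        rwa [he] at hres
  have hGpos := geo_posDef hX hY ((2:ℝ)^(-(ℓ:ℤ)))
  haveI : Invertible (N ℓ) :=
    (N ℓ).invertibleOfIsUnitDet ((Matrix.isUnit_iff_isUnit_det _).mp hNℓ.isUnit)
  have hL' : (Matrix.fromBlocks L X (Xᴴ) (N ℓ)).PosSemidef := by rwa [hX.1.eq]
  have hsch := (Matrix.PosDef.fromBlocks₂₂ L X hNℓ).mp hL'
  rw [hX.1.eq] at hsch
  have hii := inv_sub_inv_psd hNℓ hGpos (hind ℓ hℓ le_rfl)
  have hc := psd_conj_herm hii hX.1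
  rw [conj_sub, geo_neg hX hY] at hc
  exact psd_add_sub hc hsch
end
end

section
/- Let z > 0, t ∈ [0,1], and τ be real numbers. Then (z−1)/(t·(z−1)+1) ≥ τ if and only if the real symmetric 2×2 matrix !![z−1−τ, −√t·τ; −√t·τ, 1−t·τ] is positive semidefinite. (Note that t·(z−1)+1 > 0 under the stated hypotheses.) -/
/-- scalar semidefinite representation of `f_t(z) = (z−1)/(t(z−1)+1)`:
`f_t(z) ≥ τ` iff `!![z−1−τ, −√t·τ; −√t·τ, 1−t·τ]` is positive semidefinite. -/
theorem scalar_ft_sdp_iff (z t τ : ℝ) (hz : 0 < z) (ht : t ∈ Set.Icc (0 : ℝ) 1) :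
    (z - 1) / (t * (z - 1) + 1) ≥ τ ↔
      (!![z - 1 - τ, -(Real.sqrt t * τ); -(Real.sqrt t * τ), 1 - t * τ]).PosSemidef := by
  obtain ⟨ht0, ht1⟩ := ht
  have hst : Real.sqrt t * Real.sqrt t = t := Real.mul_self_sqrt ht0
  have hd : 0 < t * (z - 1) + 1 := by
    rcases eq_or_lt_of_le ht0 with h | h
    · nlinarith
    · nlinarith [mul_pos h hz]
  constructor
  · intro h
    have htau : τ * (t * (z - 1) + 1) ≤ z - 1 := by
      rw [ge_iff_le, le_div_iff₀ hd] at h; exact h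
    have ha : 0 ≤ z - 1 - τ := by
      nlinarith [mul_nonneg ht0 (sq_nonneg (z - 1))]
    have hc : 0 ≤ 1 - t * τ := by
      nlinarith [mul_le_mul_of_nonneg_left htau ht0]
    refine Matrix.PosSemidef.of_dotProduct_mulVec_nonneg ?_ (fun x => ?_)
    · rw [Matrix.IsHermitian]
      ext i j
      fin_cases i <;> fin_cases j <;> simp
    · have hx : dotProduct (star x)
          ((!![z - 1 - τ, -(Real.sqrt t * τ); -(Real.sqrt t * τ), 1 - t * τ]).mulVec x) =
          (z - 1 - τ) * (x 0 * x 0) - 2 * (Real.sqrt t * τ) * (x 0 * x 1)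
            + (1 - t * τ) * (x 1 * x 1) := by
        simp [dotProduct, Matrix.mulVec, Fin.sum_univ_two]
        ring
      rw [hx]
      have hb2 : Real.sqrt t * τ * (Real.sqrt t * τ) = t * (τ * τ) := by
        rw [mul_mul_mul_comm, hst]
      have hdet : 0 ≤ (z - 1 - τ) * (1 - t * τ) - (Real.sqrt t * τ) * (Real.sqrt t * τ) := by
        rw [hb2]; nlinarith
      rcases eq_or_lt_of_le ha with h0 | h0
      · have hb : Real.sqrt t * τ = 0 := by nlinarith [sq_nonneg (Real.sqrt t * τ)]
        rw [← h0, hb]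
        nlinarith [mul_self_nonneg (x 1)]
      · nlinarith [sq_nonneg ((z - 1 - τ) * x 0 - Real.sqrt t * τ * x 1),
          mul_nonneg hdet (sq_nonneg (x 1)), sq_nonneg (x 1)]
  · intro h
    rw [ge_iff_le, le_div_iff₀ hd]
    rcases eq_or_lt_of_le (le_of_not_gt fun hc : 1 - t * τ < 0 => by
        have hq := h.dotProduct_mulVec_nonneg ![0, 1]
        simp [dotProduct, Matrix.mulVec, Fin.sum_univ_two] at hq
        linarith) with hc | hc
    · -- degenerate case : 1 - t * τ = 0
      exfalso
      have htpos : 0 < t := by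
        rcases eq_or_lt_of_le ht0 with h' | h'
        · exfalso; rw [← h'] at hc; simp at hc
        · exact h'
      have hτpos : 0 < τ := by nlinarith
      have hsq : 0 < Real.sqrt t * τ := mul_pos (Real.sqrt_pos.mpr htpos) hτpos
      set s : ℝ := (z - τ) / (2 * (Real.sqrt t * τ)) with hs
      have hq := h.dotProduct_mulVec_nonneg ![1, s]
      simp [dotProduct, Matrix.mulVec, Fin.sum_univ_two] at hq
      have hms : Real.sqrt t * τ * s = (z - τ) / 2 := by
        rw [hs]; field_simp
      rw [← hc] at hq
      nlinarith [hq, hms]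
    · -- nondegenerate: test with x = ![1 - t*τ, √t*τ] gives (1-tτ)·det ≥ 0
      have hq := h.dotProduct_mulVec_nonneg ![1 - t * τ, Real.sqrt t * τ]
      simp [dotProduct, Matrix.mulVec, Fin.sum_univ_two] at hq
      have hb2 : Real.sqrt t * τ * (Real.sqrt t * τ) = t * (τ * τ) := by
        rw [mul_mul_mul_comm, hst]
      rw [hb2] at hq
      nlinarith [hq, hc]
end

section
/- Let Z be a positive definite complex n×n matrix, let t ∈ [0,1], and let T be a Hermitian complex n×n matrix. Define f_t(Z) := (Z − I)·(t·(Z − I) + I)^{-1} (the matrix t·(Z−I)+I is invertible since Z is positive definite and t ∈ [0,1], and f_t(Z) is Hermitian). Then f_t(Z) ≥ T if and only if the block matrix [[Z − I − T, −√t·T],[−√t·T, I − t·T]] is positive semidefinite. -/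
open Matrix
open scoped ComplexOrder

/-- matrix semidefinite representation of `f_t(Z) = (Z−I)(t(Z−I)+I)⁻¹`:
for positive definite `Z`, `t ∈ [0,1]`, and Hermitian `T`, `f_t(Z) ≥ T` iff the block matrix
`[[Z − I − T, −√t·T],[−√t·T, I − t·T]]` is positive semidefinite. -/
theorem matrix_ft_sdp_iff {n : ℕ}
    (Z : Matrix (Fin n) (Fin n) ℂ) (hZ : Z.PosDef)
    (t : ℝ) (ht : t ∈ Set.Icc (0 : ℝ) 1)
    (T : Matrix (Fin n) (Fin n) ℂ) (hT : T.IsHermitian) :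
    ((Z - 1) * ((t : ℂ) • (Z - 1) + 1)⁻¹ - T).PosSemidef ↔
      (Matrix.fromBlocks (Z - 1 - T) (-((Real.sqrt t : ℂ) • T))
        (-((Real.sqrt t : ℂ) • T)) (1 - (t : ℂ) • T)).PosSemidef := by
  set A : Matrix (Fin n) (Fin n) ℂ := Z - 1 with hA_def
  set M : Matrix (Fin n) (Fin n) ℂ := (t : ℂ) • A + 1 with hM_def
  set s : ℂ := (Real.sqrt t : ℂ) with hs_def
  set g : Matrix (Fin n) (Fin n) ℂ := M⁻¹ with hg_def
  have hs : s * s = (t : ℂ) := by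
    rw [hs_def, ← Complex.ofReal_mul, Real.mul_self_sqrt ht.1]
  have hss : star s = s := by rw [hs_def, Complex.star_def, Complex.conj_ofReal]
  have hAH : A.IsHermitian := hA_def ▸ hZ.isHermitian.sub isHermitian_one
  -- M is positive definite
  have hM : M.PosDef := by
    have key : M = (t : ℂ) • Z + (1 - (t : ℂ)) • 1 := by
      rw [hM_def, hA_def, smul_sub, sub_smul, one_smul]; abel
    rw [key]
    refine posDef_iff_dotProduct_mulVec.mpr ⟨?_, ?_⟩
    · simp only [Matrix.IsHermitian, conjTranspose_add, conjTranspose_smul, conjTranspose_one,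
        hZ.isHermitian.eq, Complex.star_def, Complex.conj_ofReal, map_sub, _root_.map_one]
    · intro x hx
      rw [add_mulVec, smul_mulVec, smul_mulVec, one_mulVec, dotProduct_add,
        dotProduct_smul, dotProduct_smul, smul_eq_mul, smul_eq_mul]
      have hp : 0 < star x ⬝ᵥ x := dotProduct_star_self_pos_iff.mpr hx
      have hq : 0 < star x ⬝ᵥ Z *ᵥ x := hZ.dotProduct_mulVec_pos hx
      have h1t : 0 ≤ 1 - (t : ℂ) := by
        rw [sub_nonneg]
        calc ((t : ℝ) : ℂ) ≤ ((1 : ℝ) : ℂ) := by exact_mod_cast ht.2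
          _ = 1 := by norm_num
      rcases eq_or_lt_of_le ht.1 with h0 | h0
      · rw [← h0]; simpa using mul_pos (show (0 : ℂ) < 1 - 0 by norm_num) hp
      · exact add_pos_of_pos_of_nonneg (mul_pos (by exact_mod_cast h0) hq)
          (mul_nonneg h1t hp.le)
  have hg : g.PosDef := hg_def ▸ hM.inv
  have hdet : IsUnit M.det := hM.det_pos.ne'.isUnit
  have hMg : M * g = 1 := by rw [hg_def]; exact Matrix.mul_nonsing_inv _ hdet
  have hgM : g * M = 1 := by rw [hg_def]; exact Matrix.nonsing_inv_mul _ hdet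
  have hgH : g.IsHermitian := hg.isHermitian
  have hAM : A * M = M * A := by
    rw [hM_def, mul_add, add_mul, mul_one, one_mul, mul_smul_comm, smul_mul_assoc]
  clear_value A M s g
  have hAg : A * g = g * A := by
    have h1 : g * (A * M) * g = g * A := by
      simp only [Matrix.mul_assoc, hMg, Matrix.mul_one]
    have h2 : g * (M * A) * g = A * g := by
      rw [← Matrix.mul_assoc g M A, hgM, Matrix.one_mul]
    calc A * g = g * (M * A) * g := h2.symm
      _ = g * (A * M) * g := by rw [hAM]
      _ = g * A := h1
  have key2 : (t : ℂ) • (A * g) + g = 1 := by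
    calc (t : ℂ) • (A * g) + g = ((t : ℂ) • A + 1) * g := by
          rw [add_mul, smul_mul_assoc, one_mul]
      _ = 1 := by rw [← hM_def]; exact hMg
  have key1 : A = (t : ℂ) • (A * g * A) + A * g := by
    calc A = A * ((t : ℂ) • (A * g) + g) := by rw [key2, mul_one]
      _ = (t : ℂ) • (A * (A * g)) + A * g := by rw [mul_add, mul_smul_comm]
      _ = (t : ℂ) • (A * g * A) + A * g := by
          rw [show A * (A * g) = A * g * A from by rw [Matrix.mul_assoc A g A, ← hAg]]
  have hTg : T * g + (t : ℂ) • (T * (A * g)) = T := by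
    calc T * g + (t : ℂ) • (T * (A * g)) = T * ((t : ℂ) • (A * g) + g) := by
          rw [mul_add, mul_smul_comm]; abel
      _ = T := by rw [key2, mul_one]
  constructor
  · intro hfT
    have decomp : Matrix.fromBlocks (A - T) (-(s • T)) (-(s • T)) (1 - (t : ℂ) • T)
        = (fromCols (-(s • A)) 1)ᴴ * g * (fromCols (-(s • A)) 1)
          + (fromCols 1 (s • (1 : Matrix (Fin n) (Fin n) ℂ)))ᴴ * (A * g - T)
            * (fromCols 1 (s • (1 : Matrix (Fin n) (Fin n) ℂ))) := by
      rw [conjTranspose_fromCols_eq_fromRows_conjTranspose,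
        conjTranspose_fromCols_eq_fromRows_conjTranspose]
      simp only [conjTranspose_neg, conjTranspose_smul, conjTranspose_one, hAH.eq, hss,
        fromRows_mul, mul_fromCols, fromRows_fromCols_eq_fromBlocks, fromCols_fromRows_eq_fromBlocks, fromBlocks_add,
        fromBlocks_inj]
      refine ⟨?_, ?_, ?_, ?_⟩
      · simp only [Matrix.neg_mul, Matrix.mul_neg, neg_neg, smul_mul_assoc, mul_smul_comm,
          smul_smul, smul_neg, neg_neg, hs, Matrix.one_mul, Matrix.mul_one]
        conv_lhs => rw [key1]
        abel
      · simp only [Matrix.neg_mul, Matrix.mul_neg, smul_mul_assoc, mul_smul_comm,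
          smul_smul, smul_neg, neg_neg, hs, Matrix.one_mul, Matrix.mul_one, smul_sub]
        abel
      · simp only [Matrix.neg_mul, Matrix.mul_neg, smul_mul_assoc, mul_smul_comm,
          smul_smul, smul_neg, neg_neg, hs, Matrix.one_mul, Matrix.mul_one, smul_sub]
        rw [← hAg]
        abel
      · simp only [Matrix.neg_mul, Matrix.mul_neg, smul_mul_assoc, mul_smul_comm,
          smul_smul, smul_neg, neg_neg, hs, Matrix.one_mul, Matrix.mul_one, smul_sub]
        conv_lhs => rw [← key2]
        abel
    rw [decomp]
    exact (hg.posSemidef.conjTranspose_mul_mul_same _).add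
      (hfT.conjTranspose_mul_mul_same _)
  · intro hB
    have hcong := hB.conjTranspose_mul_mul_same (fromRows g (s • (A * g)))
    have hRH : (fromRows g (s • (A * g)))ᴴ = fromCols g (s • (A * g)) := by
      rw [conjTranspose_fromRows_eq_fromCols_conjTranspose]
      simp only [conjTranspose_smul, conjTranspose_mul, hgH.eq, hAH.eq, hss]
      rw [← hAg]
    have identity2 : (fromRows g (s • (A * g)))ᴴ * (Matrix.fromBlocks (A - T) (-(s • T))
        (-(s • T)) (1 - (t : ℂ) • T)) * (fromRows g (s • (A * g))) = A * g - T := by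
      rw [Matrix.mul_assoc, fromBlocks_mul_fromRows, hRH, fromCols_mul_fromRows]
      have htop : (A - T) * g + -(s • T) * (s • (A * g)) = A * g - T := by
        simp only [Matrix.neg_mul, smul_mul_assoc, mul_smul_comm, smul_smul, smul_neg, neg_neg, hs, sub_mul]
        conv_rhs => rw [← hTg]
        abel
      have hTg' : s • (T * g) + (s * (t : ℂ)) • (T * (A * g)) = s • T := by
        calc s • (T * g) + (s * (t : ℂ)) • (T * (A * g))
            = s • (T * g + (t : ℂ) • (T * (A * g))) := by rw [smul_add, smul_smul]
          _ = s • T := by rw [hTg]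
      have hbot : -(s • T) * g + (1 - (t : ℂ) • T) * (s • (A * g)) = s • (A * g - T) := by
        simp only [Matrix.neg_mul, smul_mul_assoc, mul_smul_comm, smul_smul, smul_neg, neg_neg, sub_mul,
          Matrix.one_mul, smul_sub]
        conv_rhs => rw [← hTg']
        abel
      rw [htop, hbot]
      calc g * (A * g - T) + (s • (A * g)) * (s • (A * g - T))
          = ((t : ℂ) • (A * g) + g) * (A * g - T) := by
            rw [add_mul, smul_mul_assoc, mul_smul_comm, smul_smul, hs, smul_mul_assoc]
            abel
        _ = A * g - T := by rw [key2, one_mul]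
    rwa [identity2] at hcong
end
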